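/- Let α ∈ (0,1/2), let γ be an integer with γ > (3α−1)/(1−2α) (so that (1−α)/k_γ < 1), and let (1−α)/k_γ < C₁ < C₂ < 1. Then there exist a strictly increasing sequence (n_i) of positive integers and integers a_i ≥ 1 such that for all sufficiently large i, C₁·k_γ·f(n_i) ≤ a_i + (γ+1)(4^{a_i}−1)/3 ≤ C₂·k_γ·f(n_i). -/

import Mathlib

open Filter FirstOrder

noncomputable section

/-! ### The binomial random graph `G(n,p)` -/

/-- The number of edges of a simple graph. -/
noncomputable def edgeCt {n : ℕ} (G : SimpleGraph (Fin n)) : ℕ := Nat.card G.edgeSet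

open scoped Classical in
/-- `prob n p Q` is the probability that the binomial random graph `G(n,p)` (on vertex set
`Fin n`) has property `Q`: the sum over all graphs `G` with `Q G` of
`p^{e(G)} (1-p)^{n(n-1)/2 - e(G)}`. -/
noncomputable def prob (n : ℕ) (p : ℝ) (Q : SimpleGraph (Fin n) → Prop) : ℝ :=
  ∑ G : SimpleGraph (Fin n),
    if Q G then p ^ edgeCt G * (1 - p) ^ (n * (n - 1) / 2 - edgeCt G) else 0

/-- `expec n p W` is the expectation of a real-valued function `W` of the binomial random
graph `G(n,p)`. -/
noncomputable def expec (n : ℕ) (p : ℝ) (W : SimpleGraph (Fin n) → ℝ) : ℝ :=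
  ∑ G : SimpleGraph (Fin n),
    W G * (p ^ edgeCt G * (1 - p) ^ (n * (n - 1) / 2 - edgeCt G))

/-! ### The graphs `W_a^γ` and `W_a^{γ,*}` -/

/-- `ωr r a = (r^a − 1)/(r−1)`, the number of vertices of the perfect `r`-ary tree of
depth `a − 1`. -/
def ωr (r a : ℕ) : ℕ := (r ^ a - 1) / (r - 1)

/-- The depth of the node with (0-based) breadth-first (heap) index `j` in the infinite
`r`-ary tree: the root has index 0, and the parent of node `j ≥ 1` is node `(j−1)/r`. -/
def heapDepth (r : ℕ) : ℕ → ℕ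
  | 0 => 0
  | j + 1 => heapDepth r (j / r) + 1
  decreasing_by exact Nat.lt_succ_of_le (Nat.div_le_self _ _)

/-- The vertex set of `W_a^γ`: the path `F₁` on `a` vertices (`Sum.inl`), together with,
for each of the `(4^a−1)/3` vertices `i` of the perfect 4-ary tree `F₂` (in breadth-first
order), the vertex `(i,0)` of `F₂` itself and the `γ` inner vertices `(i,1),…,(i,γ)` of the
path `P_{γ+2}` joining `i` to the vertex of `F₁` at the same distance from the root. -/
abbrev WVert (γ a : ℕ) := Fin a ⊕ (Fin (ωr 4 a) × Fin (γ + 1))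

/-- Base (directed) adjacency relation generating `W_a^γ`: consecutive `F₁`-vertices;
the last inner path vertex `(i,γ)` is joined to the `F₁`-vertex at depth of `i`;
consecutive vertices along each `P_{γ+2}`; and tree edges of the perfect 4-ary tree
(in heap indexing, `j` is the parent of `i ≥ 1` iff `j = (i−1)/4`). -/
def Wbase (γ a : ℕ) : WVert γ a → WVert γ a → Prop
  | Sum.inl u, Sum.inl v => (v : ℕ) = (u : ℕ) + 1
  | Sum.inl u, Sum.inr iv => (iv.2 : ℕ) = γ ∧ heapDepth 4 (iv.1 : ℕ) = (u : ℕ)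
  | Sum.inr _, Sum.inl _ => False
  | Sum.inr iv, Sum.inr jw =>
      (iv.1 = jw.1 ∧ (jw.2 : ℕ) = (iv.2 : ℕ) + 1) ∨
      ((iv.2 : ℕ) = 0 ∧ (jw.2 : ℕ) = 0 ∧ 1 ≤ (iv.1 : ℕ) ∧ (jw.1 : ℕ) = ((iv.1 : ℕ) - 1) / 4)

/-- The graph `W_a^γ`. -/
def WG (γ a : ℕ) : SimpleGraph (WVert γ a) := SimpleGraph.fromRel (Wbase γ a)

/-- The vertex set of `W_a^{γ,*}` (with `ω₁ = ωr r a`, `ω₂ = ωr r ω₁`), as five pieces: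
the path `F₁` on `a` vertices; the tree `F₂` together with the inner vertices of the
paths `P_{γ+2}` joining `F₂` to `F₁` (pairs `(i,k)`, `k = 0` being the `F₂`-vertex itself);
the `γ` inner vertices of the paths `P_{γ+2}` joining the `i`-th vertex of `F₂` (in
breadth-first order) to the `i`-th vertex of the path `F̃₁`; the path `F̃₁` on `ω₁`
vertices; and the tree `F̃₂` together with the inner vertices of the paths `P_{γ+2}`
joining `F̃₂` to `F̃₁`. -/
abbrev WSVert (γ r a : ℕ) :=
  Fin a ⊕ ((Fin (ωr r a) × Fin (γ + 1)) ⊕ ((Fin (ωr r a) × Fin γ) ⊕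
    (Fin (ωr r a) ⊕ (Fin (ωr r (ωr r a)) × Fin (γ + 1)))))

/-- Base (directed) adjacency relation generating `W_a^{γ,*}`. -/
def WSbase (γ r a : ℕ) : WSVert γ r a → WSVert γ r a → Prop
  | .inl u, .inl v => (v : ℕ) = (u : ℕ) + 1
  | .inl u, .inr (.inl iv) => (iv.2 : ℕ) = γ ∧ heapDepth r (iv.1 : ℕ) = (u : ℕ)
  | .inr (.inl iv), .inr (.inl jw) =>
      (iv.1 = jw.1 ∧ (jw.2 : ℕ) = (iv.2 : ℕ) + 1) ∨
      ((iv.2 : ℕ) = 0 ∧ (jw.2 : ℕ) = 0 ∧ 1 ≤ (iv.1 : ℕ) ∧ (jw.1 : ℕ) = ((iv.1 : ℕ) - 1) / r)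
  | .inr (.inl iv), .inr (.inr (.inl jm)) => (iv.2 : ℕ) = 0 ∧ iv.1 = jm.1 ∧ (jm.2 : ℕ) = 0
  | .inr (.inl iv), .inr (.inr (.inr (.inl d))) => γ = 0 ∧ (iv.2 : ℕ) = 0 ∧ (iv.1 : ℕ) = (d : ℕ)
  | .inr (.inr (.inl im)), .inr (.inr (.inl jm)) => im.1 = jm.1 ∧ (jm.2 : ℕ) = (im.2 : ℕ) + 1
  | .inr (.inr (.inl im)), .inr (.inr (.inr (.inl d))) =>
      (im.2 : ℕ) + 1 = γ ∧ (im.1 : ℕ) = (d : ℕ)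
  | .inr (.inr (.inr (.inl d))), .inr (.inr (.inr (.inl e))) => (e : ℕ) = (d : ℕ) + 1
  | .inr (.inr (.inr (.inl d))), .inr (.inr (.inr (.inr jw))) =>
      (jw.2 : ℕ) = γ ∧ heapDepth r (jw.1 : ℕ) = (d : ℕ)
  | .inr (.inr (.inr (.inr iv))), .inr (.inr (.inr (.inr jw))) =>
      (iv.1 = jw.1 ∧ (jw.2 : ℕ) = (iv.2 : ℕ) + 1) ∨
      ((iv.2 : ℕ) = 0 ∧ (jw.2 : ℕ) = 0 ∧ 1 ≤ (iv.1 : ℕ) ∧ (jw.1 : ℕ) = ((iv.1 : ℕ) - 1) / r)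
  | _, _ => False

/-- The graph `W_a^{γ,*}`. -/
def WSG (γ r a : ℕ) : SimpleGraph (WSVert γ r a) := SimpleGraph.fromRel (WSbase γ r a)

/-- `Vnum γ r a = V_{γ,r}(a) = a + 2(γ+1)ω_r(a) + (γ+1)ω_r(ω_r(a))`,
the number of vertices of `W_a^{γ,*}`. -/
def Vnum (γ r a : ℕ) : ℕ := a + 2 * (γ + 1) * ωr r a + (γ + 1) * ωr r (ωr r a)

/-- `s` is (the vertex set of) an induced copy of `H` in `G`. -/
def IsInducedCopy {V W : Type} (H : SimpleGraph W) (G : SimpleGraph V) (s : Set V) : Prop :=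
  Nonempty (H ≃g G.induce s)

/-! ### The quantities `k_γ` and `f` -/

/-- `kcoef α γ = k_γ = 2(1 − α(γ+2)/(γ+1))`. -/
def kcoef (α : ℝ) (γ : ℕ) : ℝ := 2 * (1 - α * ((γ : ℝ) + 2) / ((γ : ℝ) + 1))

/-- `ff α x = f(x) = x^α · ln x`. -/
def ff (α x : ℝ) : ℝ := x ^ α * Real.log x

/-! ### The language `L_m` and EMSO satisfaction -/

/-- Relation symbols of the language `L_m`: `m` unary symbols and one binary symbol. -/
def LRel (m : ℕ) : ℕ → Type
  | 1 => Fin m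
  | 2 => Unit
  | _ => Empty

/-- The first-order language `L_m`: one binary relation symbol, `m` unary relation symbols
and no function symbols. -/
def Lang (m : ℕ) : Language where
  Functions := fun _ => Empty
  Relations := LRel m

/-- The `L_m`-structure on `Fin n` whose binary relation is adjacency in the graph `G` and
whose `i`-th unary relation is membership in `S i`. -/
def structOf {n m : ℕ} (G : SimpleGraph (Fin n)) (S : Fin m → Set (Fin n)) :
    (Lang m).Structure (Fin n) where
  funMap := fun f _ => Empty.elim f
  RelMap := fun {k} r v =>
    match k, r, v with
    | 1, i, v => v 0 ∈ S i
    | 2, _, v => G.Adj (v 0) (v 1)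
    | 0, r, _ => Empty.elim r
    | (_ + 3), r, _ => Empty.elim r

/-- `G` EMSO-satisfies the `L_m`-sentence `φ`: there are sets `S 0, …, S (m-1)` of vertices
such that the structure on `Fin n` given by adjacency in `G` and membership in the `S i`
satisfies `φ`. -/
def EMSOSat {n m : ℕ} (G : SimpleGraph (Fin n)) (φ : (Lang m).Sentence) : Prop :=
  ∃ S : Fin m → Set (Fin n),
    @FirstOrder.Language.Sentence.Realize (Lang m) (Fin n) (structOf G S) φ

/-- Let α ∈ (0,1/2), γ > (3α−1)/(1−2α), and (1−α)/k_γ < C₁ < C₂ < 1. Then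
there exist a strictly increasing sequence (n_i) of positive integers and integers
a_i ≥ 1 such that for all sufficiently large i,
C₁·k_γ·f(n_i) ≤ a_i + (γ+1)(4^{a_i}−1)/3 ≤ C₂·k_γ·f(n_i). -/
private lemma rpow_succ_le_aux (x : ℝ) (hx : 0 ≤ x) {p : ℝ} (h0 : 0 ≤ p) (h1 : p ≤ 1) :
    (x + 1) ^ p ≤ x ^ p + 1 := by
  have h := NNReal.rpow_add_le_add_rpow (Real.toNNReal x) 1 h0 h1
  rw [NNReal.one_rpow] at h
  have h2 := NNReal.coe_le_coe.2 h
  push_cast at h2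
  rwa [Real.coe_toNNReal x hx] at h2

set_option maxHeartbeats 2000000 in
theorem stmt17 (α : ℝ) (hα0 : 0 < α) (hα : α < 1 / 2) (γ : ℕ)
    (hγ : (γ : ℝ) > (3 * α - 1) / (1 - 2 * α))
    (C₁ C₂ : ℝ) (hC1 : (1 - α) / kcoef α γ < C₁) (hC12 : C₁ < C₂) (hC2 : C₂ < 1) :
    ∃ n : ℕ → ℕ, StrictMono n ∧ (∀ i, 0 < n i) ∧
      ∃ a : ℕ → ℕ, (∀ i, 1 ≤ a i) ∧
        ∀ᶠ i : ℕ in atTop,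
          C₁ * kcoef α γ * ff α (n i) ≤ (a i : ℝ) + ((γ : ℝ) + 1) * ((4 : ℝ) ^ a i - 1) / 3 ∧
          (a i : ℝ) + ((γ : ℝ) + 1) * ((4 : ℝ) ^ a i - 1) / 3 ≤ C₂ * kcoef α γ * ff α (n i) := by
  have hγ0 : (0:ℝ) ≤ (γ:ℝ) := Nat.cast_nonneg γ
  have hγ1 : (0:ℝ) < (γ:ℝ) + 1 := by linarith
  set k := kcoef α γ with hkdef
  have hk2 : k ≤ 2 := by
    have h : 0 ≤ α * ((γ:ℝ) + 2) / ((γ:ℝ) + 1) := by positivity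
    rw [hkdef, kcoef]; linarith
  have hk0 : 0 < k := by
    rw [hkdef, kcoef]
    have h1 : α * ((γ:ℝ) + 2) / ((γ:ℝ) + 1) < 1 := by
      rw [div_lt_one hγ1]; nlinarith
    linarith
  have hC1pos : 0 < C₁ := by
    have h : 0 < (1 - α) / k := div_pos (by linarith) hk0
    linarith
  have hC2pos : 0 < C₂ := lt_trans hC1pos hC12
  have hC14 : C₂ < 4 * C₁ := by
    have h1 : (1 - α) / 2 ≤ (1 - α) / k :=
      div_le_div_of_nonneg_left (by linarith) hk0 hk2
    linarith
  have hδ : 0 < 4 * C₁ - C₂ := by linarith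
  -- the middle quantity
  set g : ℕ → ℝ := fun j => ((j:ℝ) + 1) + ((γ:ℝ) + 1) * ((4:ℝ) ^ (j + 1) - 1) / 3 with hgdef
  have h4pow : ∀ j : ℕ, (1:ℝ) ≤ (4:ℝ) ^ (j + 1) := fun j => one_le_pow₀ (by norm_num)
  have hgpos : ∀ j, 0 < g j := by
    intro j
    have h4 := h4pow j
    have hj : (0:ℝ) ≤ (j:ℝ) := Nat.cast_nonneg j
    simp only [hgdef]; nlinarith
  have hgmono : ∀ j, g j ≤ g (j + 1) := by
    intro j
    have h4 : (4:ℝ) ^ (j + 1) ≤ (4:ℝ) ^ (j + 1 + 1) :=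
      pow_le_pow_right₀ (by norm_num) (by omega)
    simp only [hgdef]; push_cast; nlinarith
  have hgtop : Tendsto g atTop atTop := by
    apply tendsto_atTop_mono (fun j => ?_)
      (tendsto_atTop_add_const_right atTop (1:ℝ) tendsto_natCast_atTop_atTop)
    have h4 := h4pow j
    simp only [hgdef]; nlinarith
  -- ff tends to infinity
  have hfftop : Tendsto (fun n : ℕ => ff α (n:ℝ)) atTop atTop := by
    have h1 : Tendsto (fun x : ℝ => x ^ α * Real.log x) atTop atTop :=
      (tendsto_rpow_atTop hα0).atTop_mul_atTop₀ Real.tendsto_log_atTop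
    exact h1.comp tendsto_natCast_atTop_atTop
  have hPtop : Tendsto (fun n : ℕ => C₂ * k * ff α (n:ℝ)) atTop atTop :=
    hfftop.const_mul_atTop (by positivity)
  have hex : ∀ j : ℕ, ∃ n : ℕ, g j ≤ C₂ * k * ff α (n:ℝ) :=
    fun j => (hPtop.eventually_ge_atTop (g j)).exists
  set N : ℕ → ℕ := fun j => Nat.find (hex j) with hNdef
  have hNspec : ∀ j, g j ≤ C₂ * k * ff α ((N j : ℕ):ℝ) := fun j => Nat.find_spec (hex j)
  have hNmin : ∀ j, ∀ m, m < N j → C₂ * k * ff α ((m:ℕ):ℝ) < g j :=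
    fun j m hm => lt_of_not_ge (Nat.find_min (hex j) hm)
  have hff0 : ff α ((0:ℕ):ℝ) = 0 := by simp [ff]
  have hN1 : ∀ j, 1 ≤ N j := by
    intro j
    rw [hNdef, Nat.le_find_iff]
    intro m hm
    interval_cases m
    rw [hff0]
    push_neg
    simpa using hgpos j
  have hNtop : Tendsto N atTop atTop := by
    rw [tendsto_atTop]
    intro b
    rcases Nat.eq_zero_or_pos b with hb | hb
    · exact Filter.Eventually.of_forall fun j => hb ▸ Nat.zero_le _
    have hne : (Finset.range b).Nonempty := ⟨0, Finset.mem_range.2 hb⟩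
    set S := (Finset.range b).sup' hne (fun m : ℕ => C₂ * k * ff α (m:ℝ)) with hS
    filter_upwards [hgtop.eventually_gt_atTop S] with j hj
    rw [hNdef, Nat.le_find_iff]
    intro m hm
    push_neg
    refine lt_of_le_of_lt ?_ hj
    rw [hS]
    exact Finset.le_sup' (fun m : ℕ => C₂ * k * ff α (m:ℝ)) (Finset.mem_range.2 hm)
  -- Lemma A: eventually C₁ f(n) ≤ C₂ f(n-1)
  have hαle : α ≤ 1 := by linarith
  have hC21 : 0 < C₂ - C₁ := by linarith
  have hrt : Tendsto (fun m : ℕ => (m:ℝ) ^ α) atTop atTop :=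
    (tendsto_rpow_atTop hα0).comp tendsto_natCast_atTop_atTop
  have hlt : Tendsto (fun m : ℕ => Real.log (m:ℝ)) atTop atTop :=
    Real.tendsto_log_atTop.comp tendsto_natCast_atTop_atTop
  have key : ∀ᶠ m : ℕ in atTop, C₁ * ff α ((m + 1 : ℕ):ℝ) ≤ C₂ * ff α ((m:ℕ):ℝ) := by
    filter_upwards [hrt.eventually_ge_atTop (3 * C₁ / (C₂ - C₁)),
      hlt.eventually_ge_atTop 2, eventually_ge_atTop 1] with m h1 h2 h3
    set x : ℝ := (m:ℝ) with hxdef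
    have hx1 : (1:ℝ) ≤ x := by rw [hxdef]; exact_mod_cast h3
    have hx0 : (0:ℝ) < x := by linarith
    have hlog0 : (0:ℝ) ≤ Real.log x := by linarith
    have hb1 : (x + 1) ^ α ≤ x ^ α + 1 := rpow_succ_le_aux x hx0.le hα0.le hαle
    have hb2 : Real.log (x + 1) ≤ Real.log x + 1 / x := by
      have h' : Real.log ((x + 1) / x) ≤ (x + 1) / x - 1 :=
        Real.log_le_sub_one_of_pos (by positivity)
      rw [Real.log_div (by linarith) (ne_of_gt hx0)] at h'
      have he : (x + 1) / x - 1 = 1 / x := by field_simp; ring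
      linarith
    have hb3 : x ^ α ≤ x := by
      calc x ^ α ≤ x ^ (1:ℝ) := Real.rpow_le_rpow_of_exponent_le hx1 hαle
        _ = x := Real.rpow_one x
    have hxα0 : (0:ℝ) ≤ x ^ α := Real.rpow_nonneg hx0.le α
    have hlogx1 : (0:ℝ) ≤ Real.log (x + 1) :=
      Real.log_nonneg (by linarith)
    have hxinv : 1 / x ≤ 1 := by rw [div_le_one hx0]; exact hx1
    have hdivle : x ^ α / x ≤ 1 := by rw [div_le_one hx0]; exact hb3
    have hff : ff α (x + 1) ≤ ff α x + Real.log x + 2 := by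
      rw [ff, ff]
      calc (x + 1) ^ α * Real.log (x + 1) ≤ (x ^ α + 1) * Real.log (x + 1) :=
            mul_le_mul_of_nonneg_right hb1 hlogx1
        _ ≤ (x ^ α + 1) * (Real.log x + 1 / x) :=
            mul_le_mul_of_nonneg_left hb2 (by positivity)
        _ = x ^ α * Real.log x + Real.log x + (x ^ α / x + 1 / x) := by
            field_simp
        _ ≤ x ^ α * Real.log x + Real.log x + 2 := by linarith
    have h1' : 3 * C₁ ≤ x ^ α * (C₂ - C₁) := (div_le_iff₀ hC21).1 h1
    have hKey : C₁ * (Real.log x + 2) ≤ (C₂ - C₁) * ff α x := by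
      rw [ff]
      have h5 := mul_le_mul_of_nonneg_right h1' hlog0
      have h6 : x ^ α * (C₂ - C₁) * Real.log x = (C₂ - C₁) * (x ^ α * Real.log x) := by ring
      have h7 : 2 * C₁ ≤ 2 * C₁ * Real.log x := by nlinarith
      linarith [h5, h6.le, h6.ge, h7]
    have hxc : ((m + 1 : ℕ):ℝ) = x + 1 := by push_cast; ring
    rw [hxc]
    have h8 := mul_le_mul_of_nonneg_left hff hC1pos.le
    linarith [h8, hKey]
  have hA : ∀ᶠ n : ℕ in atTop, C₁ * ff α ((n:ℕ):ℝ) ≤ C₂ * ff α ((n - 1 : ℕ):ℝ) := by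
    filter_upwards [(tendsto_sub_atTop_nat 1).eventually key, eventually_ge_atTop 1]
      with n h hn
    have he : n - 1 + 1 = n := by omega
    rwa [he] at h
  -- E1 : eventually left inequality
  have hE1 : ∀ᶠ j in atTop, C₁ * k * ff α ((N j : ℕ):ℝ) ≤ g j := by
    filter_upwards [hNtop.eventually hA] with j hj
    have h1 : C₂ * k * ff α ((N j - 1 : ℕ):ℝ) < g j :=
      hNmin j (N j - 1) (by have := hN1 j; omega)
    calc C₁ * k * ff α ((N j : ℕ):ℝ) = k * (C₁ * ff α ((N j : ℕ):ℝ)) := by ring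
      _ ≤ k * (C₂ * ff α ((N j - 1 : ℕ):ℝ)) := mul_le_mul_of_nonneg_left hj hk0.le
      _ = C₂ * k * ff α ((N j - 1 : ℕ):ℝ) := by ring
      _ ≤ g j := h1.le
  -- E3 : growth of g beats the ratio C₂/C₁
  have hE3 : ∀ᶠ j in atTop, C₂ * g j < C₁ * g (j + 1) := by
    obtain ⟨M, hM⟩ := exists_nat_ge (6 * C₂ / (4 * C₁ - C₂) + 1)
    filter_upwards [eventually_ge_atTop (M + 1)] with j hj
    have hjM : (M:ℝ) + 1 ≤ (j:ℝ) := by exact_mod_cast hj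
    have hj1 : (1:ℝ) ≤ (j:ℝ) := by
      have : (0:ℝ) ≤ (M:ℝ) := Nat.cast_nonneg M
      linarith
    have hsqn : j ^ 2 ≤ 4 ^ (j + 1) := by
      have h1 : j < 2 ^ j := Nat.lt_two_pow_self
      have h2 : j ^ 2 ≤ (2 ^ j) ^ 2 := Nat.pow_le_pow_left h1.le 2
      have h3 : (2 ^ j) ^ 2 = 4 ^ j := by
        rw [show (4:ℕ) = 2 ^ 2 by norm_num, ← pow_mul, ← pow_mul, Nat.mul_comm]
      have h4 : (4:ℕ) ^ j ≤ 4 ^ (j + 1) := Nat.pow_le_pow_right (by norm_num) (by omega)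
      omega
    have hsq : ((j:ℝ)) ^ 2 ≤ (4:ℝ) ^ (j + 1) := by exact_mod_cast hsqn
    have h41 := h4pow j
    set T : ℝ := (4:ℝ) ^ (j + 1) with hT
    have hT0 : (0:ℝ) < T := by linarith
    -- key2 : C₂ * (j+1) ≤ δ/3 * j²
    have hjb : 6 * C₂ / (4 * C₁ - C₂) ≤ (j:ℝ) := by linarith
    have hjb2 : 6 * C₂ ≤ (4 * C₁ - C₂) * (j:ℝ) := by
      rw [div_le_iff₀ hδ] at hjb; linarith [hjb]
    have key2 : C₂ * ((j:ℝ) + 1) ≤ (4 * C₁ - C₂) / 3 * (j:ℝ) ^ 2 := by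
      have ha := mul_le_mul_of_nonneg_right hjb2 (by positivity : (0:ℝ) ≤ (j:ℝ))
      have hb := mul_le_mul_of_nonneg_left hj1 hC2pos.le
      nlinarith [ha, hb]
    have key3 : (4 * C₁ - C₂) / 3 * (j:ℝ) ^ 2 ≤ ((γ:ℝ) + 1) / 3 * ((4 * C₁ - C₂) * T) := by
      have h1 : (4 * C₁ - C₂) * (j:ℝ) ^ 2 ≤ (4 * C₁ - C₂) * T :=
        mul_le_mul_of_nonneg_left hsq hδ.le
      nlinarith [mul_nonneg hδ.le hT0.le]
    have key2' : C₂ * ((j:ℝ) + 1) ≤ ((γ:ℝ) + 1) / 3 * ((4 * C₁ - C₂) * T) :=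
      le_trans key2 key3
    have hpow2 : (4:ℝ) ^ (j + 1 + 1) = 4 * T := by rw [hT, pow_succ]; ring
    simp only [hgdef]
    rw [hpow2]
    push_cast
    nlinarith [key2', hC1pos, hC2pos, hγ1, hT0, hC21,
      mul_pos hγ1 (mul_pos hC21 hT0)]
  -- eventual strict monotonicity of N
  have hstrict : ∀ᶠ j in atTop, N j < N (j + 1) := by
    filter_upwards [hE1, hE3] with j h1 h3
    have hgj : g j < g (j + 1) := by
      have h5 : C₁ * g (j + 1) ≤ C₂ * g (j + 1) :=
        mul_le_mul_of_nonneg_right hC12.le (hgpos _).le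
      exact lt_of_mul_lt_mul_left (lt_of_lt_of_le h3 h5) hC2pos.le
    rw [hNdef, Nat.lt_find_iff]
    intro m hm
    push_neg
    rcases lt_or_eq_of_le hm with hlt | heq
    · exact lt_of_lt_of_le (lt_of_lt_of_le (hNmin j m hlt) (hgmono j)) (le_refl _)
    · rw [heq]
      have h4 : C₁ * (C₂ * k * ff α ((N j : ℕ):ℝ)) = C₂ * (C₁ * k * ff α ((N j : ℕ):ℝ)) := by
        ring
      have h5 : C₂ * (C₁ * k * ff α ((N j : ℕ):ℝ)) ≤ C₂ * g j :=
        mul_le_mul_of_nonneg_left h1 hC2pos.le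
      have h6 : C₁ * (C₂ * k * ff α ((N j : ℕ):ℝ)) < C₁ * g (j + 1) := by
        rw [h4]; exact lt_of_le_of_lt h5 h3
      exact lt_of_mul_lt_mul_left h6 hC1pos.le
  -- assemble
  obtain ⟨J, hJ⟩ := Filter.eventually_atTop.1 (hE1.and hstrict)
  refine ⟨fun i => N (i + J), ?_, fun i => hN1 (i + J), fun i => i + J + 1,
    fun i => Nat.le_add_left 1 (i + J), ?_⟩
  · apply strictMono_nat_of_lt_succ
    intro i
    have := (hJ (i + J) (by omega)).2
    have he : i + 1 + J = (i + J) + 1 := by omega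
    rw [he]
    exact this
  · apply Filter.Eventually.of_forall
    intro i
    have hl := (hJ (i + J) (by omega)).1
    have hr := hNspec (i + J)
    have hgval : g (i + J) =
        ((i + J + 1 : ℕ):ℝ) + ((γ:ℝ) + 1) * ((4:ℝ) ^ (i + J + 1) - 1) / 3 := by
      simp only [hgdef]; push_cast; ring
    constructor
    · rw [← hgval]; exact hl
    · rw [← hgval]; exact hr
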